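/- Let d ≥ 3, ε > 0, α ∈ ℝ, and ψ(t) = t^{d+ε}(log t)^α for t ≥ t₀ (large). Then the Young conjugate satisfies ψ*(s) ~ s^{(d+ε)/(d+ε−1)}·(log s)^{−α/(d+ε−1)} as s → ∞; more precisely, there exist constants 0 < c₁ ≤ c₂ and s₀ such that c₁ ≤ ψ*(s) / [s^{(d+ε)/(d+ε−1)}(log s)^{−α/(d+ε−1)}] ≤ c₂ for all s ≥ s₀. -/

import Mathlib

open Filter Real

lemma aux_loglog : Tendsto (fun s : ℝ => Real.log (Real.log s) / Real.log s) atTop (nhds 0) := by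
  have h := (Real.tendsto_pow_log_div_mul_add_atTop 1 0 1 one_ne_zero).comp Real.tendsto_log_atTop
  simpa [Function.comp_def] using h

lemma aux_rpow_log_atTop (b c : ℝ) (hb : 0 < b) :
    Tendsto (fun x : ℝ => x ^ b * Real.log x ^ c) atTop atTop := by
  have h1 : Tendsto (fun x : ℝ => Real.log x *
      (b + c * (Real.log (Real.log x) / Real.log x))) atTop atTop := by
    apply Filter.Tendsto.atTop_mul_pos (C := b) hb Real.tendsto_log_atTop
    simpa using (tendsto_const_nhds (x := b)).add (aux_loglog.const_mul c)
  refine (Real.tendsto_exp_atTop.comp h1).congr' ?_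
  filter_upwards [eventually_gt_atTop (1:ℝ), Real.tendsto_log_atTop.eventually_gt_atTop 1]
    with x hx hlx
  have hx0 : (0:ℝ) < x := lt_trans one_pos hx
  have hlx0 : 0 < Real.log x := lt_trans one_pos hlx
  show Real.exp _ = _
  rw [Real.rpow_def_of_pos hx0, Real.rpow_def_of_pos hlx0, ← Real.exp_add]
  congr 1
  field_simp

lemma aux_log_ratio (lam b c : ℝ) (hlam : 0 < lam) :
    Tendsto (fun s : ℝ => Real.log (lam * (s ^ b * Real.log s ^ c)) / Real.log s)
      atTop (nhds b) := by
  have h0 : Tendsto (fun s : ℝ => Real.log lam / Real.log s +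
      (b + c * (Real.log (Real.log s) / Real.log s))) atTop (nhds b) := by
    have := (Filter.Tendsto.div_atTop (tendsto_const_nhds (x := Real.log lam))
      Real.tendsto_log_atTop).add ((tendsto_const_nhds (x := b)).add (aux_loglog.const_mul c))
    simpa using this
  refine h0.congr' ?_
  filter_upwards [eventually_gt_atTop (1:ℝ), Real.tendsto_log_atTop.eventually_gt_atTop 1]
    with s hs hls
  have hs0 : (0:ℝ) < s := lt_trans one_pos hs
  have hls0 : 0 < Real.log s := lt_trans one_pos hls
  have h1 : Real.log (lam * (s ^ b * Real.log s ^ c))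
      = Real.log lam + (b * Real.log s + c * Real.log (Real.log s)) := by
    rw [Real.log_mul hlam.ne' (by positivity), Real.log_mul (by positivity) (by positivity),
      Real.log_rpow hs0, Real.log_rpow hls0]
  rw [h1]
  field_simp

lemma aux_rpow_minmax (a b x c : ℝ) (ha : 0 < a) (hax : a ≤ x) (hxb : x ≤ b) :
    min (a ^ c) (b ^ c) ≤ x ^ c ∧ x ^ c ≤ max (a ^ c) (b ^ c) := by
  rcases le_or_gt 0 c with hc | hc
  · exact ⟨(min_le_left _ _).trans (Real.rpow_le_rpow ha.le hax hc),
      (Real.rpow_le_rpow (ha.le.trans hax) hxb hc).trans (le_max_right _ _)⟩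
  · exact ⟨(min_le_right _ _).trans (Real.rpow_le_rpow_of_nonpos (ha.trans_le hax) hxb hc.le),
      (Real.rpow_le_rpow_of_nonpos ha hax hc.le).trans (le_max_left _ _)⟩

/-- The Young conjugate `ψ*(s) = sup_{t ≥ 0} (s·t − ψ(t))`. -/
noncomputable def youngConj (ψ : ℝ → ℝ) (s : ℝ) : ℝ :=
  sSup {x : ℝ | ∃ t ≥ (0:ℝ), x = s * t - ψ t}

/-- `ψ` is an N-function. -/
def IsNFunction (ψ : ℝ → ℝ) : Prop :=
  ConvexOn ℝ (Set.Ici 0) ψ ∧ MonotoneOn ψ (Set.Ici 0) ∧ ψ 0 = 0 ∧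
  Filter.Tendsto (fun t => ψ t / t) (nhdsWithin 0 (Set.Ioi 0)) (nhds 0) ∧
  Filter.Tendsto (fun t => ψ t / t) Filter.atTop Filter.atTop

set_option maxHeartbeats 2000000 in
theorem stmt19 (d : ℕ) (hd : 3 ≤ d) (ε α t₀ : ℝ) (hε : 0 < ε) (ht₀ : 1 < t₀)
    (ψ : ℝ → ℝ) (hN : IsNFunction ψ)
    (hψ : ∀ t ≥ t₀, ψ t = t ^ ((d:ℝ) + ε) * Real.log t ^ α) :
    ∃ c₁ c₂ s₀ : ℝ, 0 < c₁ ∧ c₁ ≤ c₂ ∧ 0 < s₀ ∧ ∀ s ≥ s₀,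
      c₁ * (s ^ (((d:ℝ) + ε) / ((d:ℝ) + ε - 1)) *
          Real.log s ^ (-α / ((d:ℝ) + ε - 1))) ≤ youngConj ψ s ∧
      youngConj ψ s ≤ c₂ * (s ^ (((d:ℝ) + ε) / ((d:ℝ) + ε - 1)) *
          Real.log s ^ (-α / ((d:ℝ) + ε - 1))) := by
  obtain ⟨-, hmono, hzero, -, -⟩ := hN
  set p : ℝ := (d:ℝ) + ε with hpdef
  set r : ℝ := p - 1 with hrdef
  have hd3 : (3:ℝ) ≤ (d:ℝ) := by exact_mod_cast hd
  have hp3 : 3 < p := by simp only [hpdef]; linarith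
  have hr2 : 2 < r := by simp only [hrdef]; linarith
  have hr0 : (0:ℝ) < r := by linarith
  have hpr : p = r + 1 := by simp only [hrdef]; ring
  -- constants
  set m : ℝ := min ((1/(2*r)) ^ α) ((2/r) ^ α) with hmdef
  set M : ℝ := max ((1/(2*r)) ^ α) ((2/r) ^ α) with hMdef
  have hm0 : 0 < m := lt_min (Real.rpow_pos_of_pos (by positivity) _)
    (Real.rpow_pos_of_pos (by positivity) _)
  have hM0 : 0 < M := lt_of_lt_of_le hm0 (min_le_left _ _ |>.trans (le_max_left _ _))
  set Λ : ℝ := max 1 ((1/m) ^ (1/r)) with hΛdef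
  have hΛ1 : (1:ℝ) ≤ Λ := le_max_left _ _
  have hΛ0 : (0:ℝ) < Λ := lt_of_lt_of_le one_pos hΛ1
  have hΛr : 1/m ≤ Λ ^ r := by
    have h1 : ((1/m) ^ (1/r)) ^ r ≤ Λ ^ r :=
      Real.rpow_le_rpow (by positivity) (le_max_right _ _) hr0.le
    rwa [← Real.rpow_mul (by positivity), one_div_mul_cancel hr0.ne', Real.rpow_one] at h1
  set lam : ℝ := min 1 ((1/(2*M)) ^ (1/r)) with hlamdef
  have hlam0 : 0 < lam := lt_min one_pos (Real.rpow_pos_of_pos (by positivity) _)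
  have hlam1 : lam ≤ 1 := min_le_left _ _
  have hlamr : lam ^ r ≤ 1/(2*M) := by
    have h1 : lam ^ r ≤ ((1/(2*M)) ^ (1/r)) ^ r :=
      Real.rpow_le_rpow hlam0.le (min_le_right _ _) hr0.le
    rwa [← Real.rpow_mul (by positivity), one_div_mul_cancel hr0.ne', Real.rpow_one] at h1
  -- the t₁ threshold for the large-t regime
  obtain ⟨t₁, ht₁⟩ := (Filter.eventually_atTop).1
    ((aux_rpow_log_atTop (r/2) α (by positivity)).eventually_ge_atTop 1)
  -- main eventual claim
  have main : ∀ᶠ s in atTop,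
      (lam/2) * (s ^ (p/r) * Real.log s ^ (-α/r)) ≤ youngConj ψ s ∧
      youngConj ψ s ≤ Λ * (s ^ (p/r) * Real.log s ^ (-α/r)) := by
    have hTtend : Tendsto (fun s : ℝ => s ^ (1/r) * Real.log s ^ (-α/r)) atTop atTop :=
      aux_rpow_log_atTop (1/r) (-α/r) (by positivity)
    have hlamT : Tendsto (fun s : ℝ => lam * (s ^ (1/r) * Real.log s ^ (-α/r))) atTop atTop :=
      hTtend.const_mul_atTop hlam0
    have hratio_lam := aux_log_ratio lam (1/r) (-α/r) hlam0
    have hratio_Λ := aux_log_ratio Λ (1/r) (-α/r) hΛ0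
    have hrr1 : 1/(2*r) < 1/r := by
      rw [div_lt_div_iff₀ (by positivity) hr0]; linarith
    have hrr2 : (1:ℝ)/r < 2/r := by
      rw [div_lt_div_iff₀ hr0 hr0]; linarith
    filter_upwards [eventually_gt_atTop (1:ℝ),
      Real.tendsto_log_atTop.eventually_gt_atTop 1,
      hlamT.eventually_ge_atTop t₀,
      hTtend.eventually_ge_atTop t₀,
      hratio_lam.eventually (eventually_ge_nhds hrr1),
      hratio_lam.eventually (eventually_le_nhds hrr2),
      hratio_Λ.eventually (eventually_ge_nhds hrr1),
      (tendsto_rpow_atTop (show (0:ℝ) < 2/r by positivity)).eventually_ge_atTop t₁,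
      (tendsto_rpow_atTop (show (0:ℝ) < 2/r by positivity)).eventually_ge_atTop t₀]
      with s hs1 hL1 hstar hTt₀ hxlo hxhi hxΛ hsp1 hsp2
    have hs0 : (0:ℝ) < s := lt_trans one_pos hs1
    have hL0 : 0 < Real.log s := lt_trans one_pos hL1
    set Ts : ℝ := s ^ (1/r) * Real.log s ^ (-α/r) with hTs
    have hT0 : 0 < Ts := by rw [hTs]; positivity
    -- the comparison quantity
    set G : ℝ := s ^ (p/r) * Real.log s ^ (-α/r) with hGdef
    have hG0 : 0 ≤ G := by rw [hGdef]; positivity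
    have hGpos : 0 < G := by rw [hGdef]; positivity
    have hGT : G = s * Ts := by
      rw [hGdef, hTs,
        show p/r = 1 + 1/r by rw [hpr]; field_simp, Real.rpow_add hs0, Real.rpow_one, mul_assoc]
    have idT_r : Ts ^ r = s * Real.log s ^ (-α) := by
      rw [hTs, Real.mul_rpow (by positivity) (by positivity),
        ← Real.rpow_mul hs0.le, ← Real.rpow_mul hL0.le,
        one_div_mul_cancel hr0.ne', div_mul_cancel₀ _ hr0.ne', Real.rpow_one]
    -- the upper bound for all t ≥ 0
    have hub : ∀ t ≥ (0:ℝ), s * t - ψ t ≤ Λ * G := by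
      intro t ht
      rcases le_or_gt t (max t₀ (Λ * Ts)) with hcase | hcase
      · -- small t: use ψ ≥ 0
        have hψ0 : 0 ≤ ψ t := by
          have h := hmono (Set.mem_Ici.2 (le_refl (0:ℝ))) (Set.mem_Ici.2 ht) ht
          rwa [hzero] at h
        have h1 : s * t ≤ s * max t₀ (Λ * Ts) := mul_le_mul_of_nonneg_left hcase hs0.le
        have h2 : s * max t₀ (Λ * Ts) ≤ Λ * G := by
          rw [mul_max_of_nonneg _ _ hs0.le]
          apply max_le
          · calc s * t₀ ≤ s * Ts := mul_le_mul_of_nonneg_left hTt₀ hs0.le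
              _ = G := hGT.symm
              _ ≤ Λ * G := le_mul_of_one_le_left hG0 hΛ1
          · rw [hGT]; exact le_of_eq (by ring)
        linarith
      · -- large t: show s·t ≤ ψ t
        have htt₀ : t₀ ≤ t := le_trans (le_max_left _ _) hcase.le
        have htT : Λ * Ts ≤ t := le_trans (le_max_right _ _) hcase.le
        have ht0 : (0:ℝ) < t := lt_of_lt_of_le (lt_trans one_pos ht₀) htt₀
        have hlt0 : 0 < Real.log t := Real.log_pos (lt_of_lt_of_le ht₀ htt₀)
        have hψt : ψ t = t * (t ^ r * Real.log t ^ α) := by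
          rw [hψ t htt₀, hpr, Real.rpow_add ht0, Real.rpow_one]; ring
        have hΛG0 : (0:ℝ) ≤ Λ * G := by positivity
        suffices hst : s ≤ t ^ r * Real.log t ^ α by
          have h2 : s * t ≤ ψ t := by
            rw [hψt]
            calc s * t ≤ (t ^ r * Real.log t ^ α) * t :=
                  mul_le_mul_of_nonneg_right hst ht0.le
              _ = t * (t ^ r * Real.log t ^ α) := by ring
          linarith
        rcases le_or_gt t (s ^ (2/r)) with hmid | hbig
        · -- middle regime
          have hlt_up : Real.log t ≤ (2/r) * Real.log s := by
            calc Real.log t ≤ Real.log (s ^ (2/r)) := Real.log_le_log ht0 hmid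
              _ = (2/r) * Real.log s := Real.log_rpow hs0 _
          have hΛT0 : 0 < Λ * Ts := by positivity
          have hlt_lo : (1/(2*r)) * Real.log s ≤ Real.log t := by
            have h4 : (1/(2*r)) * Real.log s ≤ Real.log (Λ * Ts) := (le_div_iff₀ hL0).1 hxΛ
            exact h4.trans (Real.log_le_log hΛT0 htT)
          set y : ℝ := Real.log t / Real.log s with hydef
          have hy_lo : 1/(2*r) ≤ y := (le_div_iff₀ hL0).2 hlt_lo
          have hy_hi : y ≤ 2/r := (div_le_iff₀ hL0).2 (by linarith)
          have hy0 : 0 < y := lt_of_lt_of_le (by positivity) hy_lo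
          have hya : m ≤ y ^ α :=
            (aux_rpow_minmax (1/(2*r)) (2/r) y α (by positivity) hy_lo hy_hi).1
          have hlt_eq : Real.log t = y * Real.log s := by rw [hydef]; field_simp
          have hlogpow : Real.log t ^ α = y ^ α * Real.log s ^ α := by
            rw [hlt_eq, Real.mul_rpow hy0.le hL0.le]
          have hΛTr : (Λ * Ts) ^ r = Λ ^ r * (s * Real.log s ^ (-α)) := by
            rw [Real.mul_rpow hΛ0.le hT0.le, idT_r]
          have htr : (Λ * Ts) ^ r ≤ t ^ r := Real.rpow_le_rpow hΛT0.le htT hr0.le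
          have hLL : Real.log s ^ (-α) * Real.log s ^ α = 1 := by
            rw [← Real.rpow_add hL0]; simp
          have key : Λ ^ r * m * s ≤ t ^ r * Real.log t ^ α := by
            have h5 : m * Real.log s ^ α ≤ Real.log t ^ α := by
              rw [hlogpow]
              exact mul_le_mul_of_nonneg_right hya (Real.rpow_nonneg hL0.le _)
            calc Λ ^ r * m * s
                = ((Λ * Ts) ^ r) * (m * Real.log s ^ α) := by
                  rw [hΛTr, show Λ ^ r * (s * Real.log s ^ (-α)) * (m * Real.log s ^ α)
                    = Λ ^ r * m * s * (Real.log s ^ (-α) * Real.log s ^ α) by ring, hLL,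
                    mul_one]
              _ ≤ t ^ r * Real.log t ^ α :=
                  mul_le_mul htr h5 (by positivity) (Real.rpow_nonneg ht0.le _)
          have h6 : 1 ≤ Λ ^ r * m := by
            have h7 := mul_le_mul_of_nonneg_right hΛr hm0.le
            rwa [one_div_mul_cancel hm0.ne'] at h7
          calc s ≤ Λ ^ r * m * s := le_mul_of_one_le_left hs0.le h6
            _ ≤ t ^ r * Real.log t ^ α := key
        · -- big regime
          have ht1 : t₁ ≤ t := le_trans hsp1 hbig.le
          have h1 : 1 ≤ t ^ (r/2) * Real.log t ^ α := ht₁ t ht1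
          have h2 : s ≤ t ^ (r/2) := by
            have h8 : s = (s ^ (2/r)) ^ (r/2) := by
              rw [← Real.rpow_mul hs0.le, show (2/r) * (r/2) = 1 by field_simp,
                Real.rpow_one]
            rw [h8]
            exact Real.rpow_le_rpow (by positivity) hbig.le (by positivity)
          have htr2 : t ^ (r/2) * t ^ (r/2) = t ^ r := by
            rw [← Real.rpow_add ht0]; ring_nf
          calc s = s * 1 := (mul_one s).symm
            _ ≤ t ^ (r/2) * (t ^ (r/2) * Real.log t ^ α) :=
                mul_le_mul h2 h1 one_pos.le (by positivity)
            _ = t ^ r * Real.log t ^ α := by rw [← htr2]; ring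
    have hbdd : BddAbove {x : ℝ | ∃ t ≥ (0:ℝ), x = s * t - ψ t} := by
      refine ⟨Λ * G, ?_⟩
      rintro x ⟨t, ht, rfl⟩
      exact hub t ht
    constructor
    · -- lower bound
      have htst₀ : t₀ ≤ lam * Ts := hstar
      have hts0 : (0:ℝ) < lam * Ts := by positivity
      have hle : s * (lam * Ts) - ψ (lam * Ts) ≤ youngConj ψ s :=
        le_csSup hbdd ⟨lam * Ts, hts0.le, rfl⟩
      set x : ℝ := Real.log (lam * Ts) / Real.log s with hxdef
      have hx_lo : 1/(2*r) ≤ x := hxlo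
      have hx_hi : x ≤ 2/r := hxhi
      have hx0 : 0 < x := lt_of_lt_of_le (by positivity) hx_lo
      have hxM : x ^ α ≤ M :=
        (aux_rpow_minmax (1/(2*r)) (2/r) x α (by positivity) hx_lo hx_hi).2
      have hlog_eq : Real.log (lam * Ts) = x * Real.log s := by
        rw [hxdef]; field_simp
      have hE : Real.log s ^ ((-α/r)*p) * Real.log s ^ α = Real.log s ^ (-α/r) := by
        rw [← Real.rpow_add hL0]; congr 1; rw [hpr]; field_simp; ring
      have hψs : ψ (lam * Ts) = lam ^ p * x ^ α * G := by
        rw [hψ (lam * Ts) htst₀, hlog_eq, Real.mul_rpow hx0.le hL0.le,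
          Real.mul_rpow hlam0.le hT0.le, hTs,
          Real.mul_rpow (by positivity) (by positivity),
          ← Real.rpow_mul hs0.le, ← Real.rpow_mul hL0.le,
          show (1/r)*p = p/r by ring, hGdef]
        linear_combination (lam ^ p * x ^ α * s ^ (p/r)) * hE
      have hstG : s * (lam * Ts) = lam * G := by rw [hGT]; ring
      have hxr : lam ^ r * x ^ α ≤ 1/2 := by
        have h9 := mul_le_mul hlamr hxM (Real.rpow_nonneg hx0.le α)
          (by positivity : (0:ℝ) ≤ 1/(2*M))
        calc lam ^ r * x ^ α ≤ (1/(2*M)) * M := h9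
          _ = 1/2 := by field_simp
      have hlamp : lam ^ p = lam * lam ^ r := by
        rw [hpr, Real.rpow_add hlam0, Real.rpow_one]; ring
      have h10 : lam ^ p * x ^ α ≤ lam / 2 := by
        rw [hlamp]
        calc lam * lam ^ r * x ^ α = lam * (lam ^ r * x ^ α) := by ring
          _ ≤ lam * (1/2) := mul_le_mul_of_nonneg_left hxr hlam0.le
          _ = lam / 2 := by ring
      have hfinal : (lam/2) * G ≤ s * (lam * Ts) - ψ (lam * Ts) := by
        rw [hψs, hstG]
        have h11 : lam ^ p * x ^ α * G ≤ (lam/2) * G := mul_le_mul_of_nonneg_right h10 hG0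
        linarith
      exact hfinal.trans hle
    · -- upper bound
      refine Real.sSup_le ?_ (by positivity)
      rintro x ⟨t, ht, rfl⟩
      exact hub t ht
  rw [Filter.eventually_atTop] at main
  obtain ⟨s₀, hs₀⟩ := main
  refine ⟨lam/2, Λ, max s₀ 1, by positivity, by linarith, lt_of_lt_of_le one_pos (le_max_right _ _),
    fun s hs => hs₀ s (le_trans (le_max_left _ _) hs)⟩
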